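/- Assume hypotheses (H1) and (H2) for a smooth Hamiltonian H on the slow–fast phase space M = ℝ^{2r} × ℝ^{2k}, with momentum map J. Then there exists a smooth 1-form ζ on the slow factor, i.e. a smooth map ζ : ℝ^{2k} → (ℝ^{2k})^*, which is closed (for every m₁ the bilinear map (u,v) ↦ (Dζ)_{m₁}(u)(v) is symmetric), such that for every m = (m₀,m₁) ∈ M and every tangent vector (u,v) ∈ ℝ^{2r} × ℝ^{2k}, ⟨d₁J⟩_m(u,v) = ζ(m₁)(v). Moreover, if J is replaced by J' = J + c∘π₁ for a smooth c : ℝ^{2k} → ℝ (π₁ the projection onto the slow factor), then the corresponding 1-form is ζ' = ζ + Dc; in particular ζ' − ζ is exact. -/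

import Mathlib

set_option synthInstance.maxHeartbeats 1000000
set_option maxHeartbeats 4000000

open Real MeasureTheory Asymptotics Set

noncomputable section

/-- Fast factor `ℝ^{2r}` with variables `(y, x)`. -/
abbrev Fast (r : ℕ) := (Fin r → ℝ) × (Fin r → ℝ)

/-- Slow factor `ℝ^{2k}` with variables `(p, q)`. -/
abbrev Slow (k : ℕ) := (Fin k → ℝ) × (Fin k → ℝ)

/-- The slow-fast phase space `M = ℝ^{2r} × ℝ^{2k}`. -/
abbrev SF (r k : ℕ) := Fast r × Slow k

/-- The fast Hamiltonian vector field `X_H^{(0)}`: `ẏ = -∂H/∂x`, `ẋ = ∂H/∂y`,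
zero slow components. -/
def fastVF {r k : ℕ} (H : SF r k → ℝ) (m : SF r k) : SF r k :=
  ((fun i => -(fderiv ℝ H m ((0, Pi.single i 1), 0)),
    fun i => fderiv ℝ H m ((Pi.single i 1, 0), 0)), 0)

/-- The slow Hamiltonian vector field `X_H^{(1)}`: `ṗ = -∂H/∂q`, `q̇ = ∂H/∂p`,
zero fast components. -/
def slowVF {r k : ℕ} (H : SF r k → ℝ) (m : SF r k) : SF r k :=
  (0, (fun j => -(fderiv ℝ H m (0, (0, Pi.single j 1))),
       fun j => fderiv ℝ H m (0, (Pi.single j 1, 0))))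

/-- The differential of `f` in the slow variables only, `d₁f`, as a 1-form. -/
def d1Form {r k : ℕ} (f : SF r k → ℝ) (m w : SF r k) : ℝ :=
  fderiv ℝ f m ((0 : Fast r), w.2)

/-- Average `⟨α⟩` of a 1-form `α` along a `2π`-periodic flow `φ`:
`⟨α⟩_m(w) = (1/2π)∫₀^{2π} α_{φ(t,m)}(D_mφ(t,·) w) dt`. -/
def avg1 {r k : ℕ} (φ : ℝ → SF r k → SF r k) (α : SF r k → SF r k → ℝ)
    (m w : SF r k) : ℝ :=
  (1 / (2 * π)) * ∫ t in (0:ℝ)..(2 * π), α (φ t m) (fderiv ℝ (φ t) m w)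

/-- Integrating operator `S(α)` on a 1-form `α` along a `2π`-periodic flow `φ`. -/
def intOp1 {r k : ℕ} (φ : ℝ → SF r k → SF r k) (α : SF r k → SF r k → ℝ)
    (m w : SF r k) : ℝ :=
  (1 / (2 * π)) * ∫ t in (0:ℝ)..(2 * π), (t - π) * α (φ t m) (fderiv ℝ (φ t) m w)


section ParInt

variable {E : Type*} [NormedAddCommGroup E] [NormedSpace ℝ E] [FiniteDimensional ℝ E]

theorem parint_hasFDerivAt (a b : ℝ) {F : Type*} [NormedAddCommGroup F] [NormedSpace ℝ F] [FiniteDimensional ℝ F]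
    (K : ℝ × E → F) (K' : ℝ × E → E →L[ℝ] F)
    (hK : Continuous K) (hK' : Continuous K')
    (hd : ∀ t x, HasFDerivAt (fun y => K (t, y)) (K' (t, x)) x) (x₀ : E) :
    HasFDerivAt (fun x => ∫ t in a..b, K (t, x)) (∫ t in a..b, K' (t, x₀)) x₀ := by
  obtain ⟨C, hC⟩ := (isCompact_uIcc.prod (isCompact_closedBall x₀ 1)).exists_bound_of_continuousOn
    hK'.continuousOn
  apply intervalIntegral.hasFDerivAt_integral_of_dominated_of_fderiv_le
    (F' := fun x t => K' (t, x)) (bound := fun _ => C) (s := Metric.ball x₀ 1) (Metric.ball_mem_nhds x₀ one_pos)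
  · exact Filter.Eventually.of_forall fun x =>
      (hK.comp (continuous_id.prodMk continuous_const)).aestronglyMeasurable
  · exact (hK.comp (continuous_id.prodMk continuous_const)).intervalIntegrable a b
  · exact (hK'.comp (continuous_id.prodMk continuous_const)).aestronglyMeasurable
  · refine Filter.Eventually.of_forall fun t ht x hx => hC (t, x) ?_
    exact Set.mk_mem_prod (uIoc_subset_uIcc ht) (Metric.ball_subset_closedBall hx)
  · exact intervalIntegrable_const
  · exact Filter.Eventually.of_forall fun t ht x hx => hd t x

end ParInt

section ParInt2x

theorem infty_add_one_le : ((⊤ : ℕ∞) : WithTop ℕ∞) + 1 ≤ ((⊤ : ℕ∞) : WithTop ℕ∞) := by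
  rw [ENat.coe_top_add_one]

theorem one_le_infty : (1 : WithTop ℕ∞) ≤ ((⊤ : ℕ∞) : WithTop ℕ∞) := by
  exact_mod_cast le_top

end ParInt2x

section ParInt2

variable {E : Type} [NormedAddCommGroup E] [NormedSpace ℝ E] [FiniteDimensional ℝ E]

theorem parint_contDiff_nat (a b : ℝ) : ∀ (n : ℕ) {F : Type} [NormedAddCommGroup F]
    [NormedSpace ℝ F] [FiniteDimensional ℝ F] (K : ℝ × E → F),
    ContDiff ℝ ((⊤ : ℕ∞) : WithTop ℕ∞) K →
    ContDiff ℝ (n : WithTop ℕ∞) (fun x => ∫ t in a..b, K (t, x)) := by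
  intro n
  induction n with
  | zero =>
    intro F _ _ _ K hK
    rw [show ((0 : ℕ) : WithTop ℕ∞) = 0 by norm_cast, contDiff_zero]
    rw [continuous_iff_continuousAt]
    intro x
    have hd := parint_hasFDerivAt a b K
      (fun p => (fderiv ℝ K p).comp (ContinuousLinearMap.inr ℝ ℝ E)) hK.continuous
      ((hK.fderiv_right infty_add_one_le).continuous.clm_comp continuous_const)
      (fun t x => ((hK.differentiable (by simp) (t, x)).hasFDerivAt).comp x
        (hasFDerivAt_prodMk_right t x)) x
    exact hd.continuousAt
  | succ n ih =>
    intro F _ _ _ K hK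
    have hK' : ContDiff ℝ ((⊤ : ℕ∞) : WithTop ℕ∞)
        (fun p : ℝ × E => (fderiv ℝ K p).comp (ContinuousLinearMap.inr ℝ ℝ E)) :=
      (hK.fderiv_right infty_add_one_le).clm_comp contDiff_const
    have hd : ∀ x : E, HasFDerivAt (fun x => ∫ t in a..b, K (t, x))
        (∫ t in a..b, (fderiv ℝ K (t, x)).comp (ContinuousLinearMap.inr ℝ ℝ E)) x := by
      intro x
      exact parint_hasFDerivAt a b K _ hK.continuous hK'.continuous
        (fun t x => ((hK.differentiable (by simp) (t, x)).hasFDerivAt).comp x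
          (hasFDerivAt_prodMk_right t x)) x
    rw [show ((n + 1 : ℕ) : WithTop ℕ∞) = (n : WithTop ℕ∞) + 1 by norm_cast]
    rw [contDiff_succ_iff_fderiv]
    refine ⟨fun x => (hd x).differentiableAt, ?_, ?_⟩
    · intro h; exact absurd h (by simp)
    · have : (fderiv ℝ fun x => ∫ t in a..b, K (t, x))
          = fun x => ∫ t in a..b, (fderiv ℝ K (t, x)).comp (ContinuousLinearMap.inr ℝ ℝ E) :=
        funext fun x => (hd x).fderiv
      rw [this]
      exact ih (fun p : ℝ × E => (fderiv ℝ K p).comp (ContinuousLinearMap.inr ℝ ℝ E)) hK'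

theorem parint_contDiff (a b : ℝ) {F : Type} [NormedAddCommGroup F]
    [NormedSpace ℝ F] [FiniteDimensional ℝ F] (K : ℝ × E → F)
    (hK : ContDiff ℝ ((⊤ : ℕ∞) : WithTop ℕ∞) K) :
    ContDiff ℝ ((⊤ : ℕ∞) : WithTop ℕ∞) (fun x => ∫ t in a..b, K (t, x)) :=
  contDiff_infty.mpr fun n => parint_contDiff_nat a b n K hK

end ParInt2


section OmSec

variable {r k : ℕ}

def OmFun (W W' : SF r k) : ℝ := ∑ i, W.1.1 i * W'.1.2 i - ∑ i, W.1.2 i * W'.1.1 i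

lemma OmFun_add_left (W V W' : SF r k) : OmFun (W + V) W' = OmFun W W' + OmFun V W' := by
  simp [OmFun, add_mul, Finset.sum_add_distrib]; ring

lemma OmFun_smul_left (c : ℝ) (W W' : SF r k) : OmFun (c • W) W' = c * OmFun W W' := by
  simp only [OmFun, Prod.smul_fst, Prod.smul_snd, Pi.smul_apply, smul_eq_mul, mul_sub,
    Finset.mul_sum]
  congr 1 <;> exact Finset.sum_congr rfl fun i _ => by ring

lemma OmFun_add_right (W W' V : SF r k) : OmFun W (W' + V) = OmFun W W' + OmFun W V := by
  simp [OmFun, mul_add, Finset.sum_add_distrib]; ring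

lemma OmFun_smul_right (c : ℝ) (W W' : SF r k) : OmFun W (c • W') = c * OmFun W W' := by
  simp only [OmFun, Prod.smul_fst, Prod.smul_snd, Pi.smul_apply, smul_eq_mul, mul_sub,
    Finset.mul_sum]
  congr 1 <;> exact Finset.sum_congr rfl fun i _ => by ring

def OmLin : SF r k →ₗ[ℝ] SF r k →ₗ[ℝ] ℝ :=
  LinearMap.mk₂ ℝ OmFun OmFun_add_left (fun c W W' => by rw [OmFun_smul_left]; rfl)
    OmFun_add_right (fun c W W' => by rw [OmFun_smul_right]; rfl)

def OmL : SF r k →L[ℝ] SF r k →L[ℝ] ℝ :=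
  LinearMap.toContinuousLinearMap
    { toFun := fun W => LinearMap.toContinuousLinearMap (OmLin W),
      map_add' := fun x y => ContinuousLinearMap.ext fun w => by
        simp [OmLin, LinearMap.coe_toContinuousLinearMap', OmFun_add_left],
      map_smul' := fun c x => ContinuousLinearMap.ext fun w => by
        simp [OmLin, LinearMap.coe_toContinuousLinearMap', OmFun_smul_left] }

@[simp] lemma OmL_apply (W W' : SF r k) : OmL W W' = OmFun W W' := by
  simp [OmL, OmLin, LinearMap.coe_toContinuousLinearMap']

lemma OmL_antisymm (W W' : SF r k) : OmL W W' = - OmL W' W := by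
  simp only [OmL_apply, OmFun, neg_sub]
  congr 1 <;> exact Finset.sum_congr rfl fun i _ => by ring

lemma fast_decomp (a b : Fin r → ℝ) :
    (((a, b), 0) : SF r k) = (∑ i, a i • (((Pi.single i 1, 0), 0) : SF r k))
      + ∑ i, b i • (((0, Pi.single i 1), 0) : SF r k) := by
  have ha : ∑ i, a i • (Pi.single i 1 : Fin r → ℝ) = a := by
    have h : ∀ i, a i • (Pi.single i 1 : Fin r → ℝ) = Pi.single i (a i) := fun i => by
      rw [← Pi.single_smul, smul_eq_mul, mul_one]
    simp only [h, Finset.univ_sum_single]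
  have hb : ∑ i, b i • (Pi.single i 1 : Fin r → ℝ) = b := by
    have h : ∀ i, b i • (Pi.single i 1 : Fin r → ℝ) = Pi.single i (b i) := fun i => by
      rw [← Pi.single_smul, smul_eq_mul, mul_one]
    simp only [h, Finset.univ_sum_single]
  have e1 : (∑ i, a i • (((Pi.single i 1, 0), 0) : SF r k)) = ((a, 0), 0) := by
    apply Prod.ext
    · apply Prod.ext
      · simp [Prod.fst_sum, ha]
      · simp [Prod.fst_sum, Prod.snd_sum]
    · simp [Prod.snd_sum]
  have e2 : (∑ i, b i • (((0, Pi.single i 1), 0) : SF r k)) = ((0, b), 0) := by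
    apply Prod.ext
    · apply Prod.ext
      · simp [Prod.fst_sum, Prod.snd_sum]
      · simp [Prod.fst_sum, Prod.snd_sum, hb]
    · simp [Prod.snd_sum]
  rw [e1, e2]
  ext <;> simp

lemma clm_fast_apply (f : SF r k →L[ℝ] ℝ) (a b : Fin r → ℝ) :
    f ((a, b), 0) = ∑ i, a i * f ((Pi.single i 1, 0), 0)
      + ∑ i, b i * f ((0, Pi.single i 1), 0) := by
  rw [fast_decomp a b, map_add, map_sum, map_sum]
  congr 1 <;> exact Finset.sum_congr rfl fun i _ => by
    rw [_root_.map_smul, smul_eq_mul]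

end OmSec

/-- Under hypotheses (H1) and (H2), the average `⟨d₁J⟩` is the
pullback of a closed 1-form `ζ` on the slow factor, and replacing `J` by
`J + c∘π₁` changes `ζ` to `ζ + Dc`; in particular the De Rham class of `ζ`
does not depend on this choice. -/

theorem stmt5 {r k : ℕ} (H : SF r k → ℝ) (hH : ContDiff ℝ (⊤ : ℕ∞) H)
    (ω : SF r k → ℝ) (hω_smooth : ContDiff ℝ (⊤ : ℕ∞) ω) (hω_pos : ∀ m, 0 < ω m)
    (φ : ℝ → SF r k → SF r k)
    (hφ_smooth : ContDiff ℝ (⊤ : ℕ∞) (fun p : ℝ × SF r k => φ p.1 p.2))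
    (hφ0 : ∀ m, φ 0 m = m)
    (hφ' : ∀ t m, HasDerivAt (fun s => φ s m) ((ω (φ t m))⁻¹ • fastVF H (φ t m)) t)
    (hper : ∀ t m, φ (t + 2 * π) m = φ t m)
    (J : SF r k → ℝ) (hJ_smooth : ContDiff ℝ (⊤ : ℕ∞) J)
    (hH2 : ∀ m (u : Fast r),
      fderiv ℝ J m (u, (0 : Slow k)) = (1 / ω m) * fderiv ℝ H m (u, 0)) :
    ∃ ζ : Slow k → (Slow k →L[ℝ] ℝ), ContDiff ℝ (⊤ : ℕ∞) ζ ∧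
      (∀ (s : Slow k) (u v : Slow k), fderiv ℝ ζ s u v = fderiv ℝ ζ s v u) ∧
      (∀ m w, avg1 φ (d1Form J) m w = ζ m.2 w.2) ∧
      (∀ c : Slow k → ℝ, ContDiff ℝ (⊤ : ℕ∞) c → ∀ m w,
        avg1 φ (d1Form (fun n => J n + c n.2)) m w = ζ m.2 w.2 + fderiv ℝ c m.2 w.2) := by
  classical
  have one_le : (1 : WithTop ℕ∞) ≤ ((⊤ : ℕ∞) : WithTop ℕ∞) := by exact_mod_cast le_top
  have two_le : (2 : WithTop ℕ∞) ≤ ((⊤ : ℕ∞) : WithTop ℕ∞) := by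
    rw [show ((2 : WithTop ℕ∞)) = ((2 : ℕ∞) : WithTop ℕ∞) by norm_cast]
    exact WithTop.coe_le_coe.mpr le_top
  have addone_le : ((⊤ : ℕ∞) : WithTop ℕ∞) + 1 ≤ ((⊤ : ℕ∞) : WithTop ℕ∞) := by
    rw [ENat.coe_top_add_one]
  have hT0 : (2 * π) ≠ 0 := by positivity
  set Φ : ℝ × SF r k → SF r k := fun p => φ p.1 p.2 with hΦdef
  have hΦs : ContDiff ℝ ((⊤ : ℕ∞) : WithTop ℕ∞) Φ := hφ_smooth
  set Y : SF r k → SF r k := fun n => (ω n)⁻¹ • fastVF H n with hYdef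
  have hdHs : ContDiff ℝ ((⊤ : ℕ∞) : WithTop ℕ∞) (fderiv ℝ H) := hH.fderiv_right addone_le
  have hfast : ContDiff ℝ ((⊤ : ℕ∞) : WithTop ℕ∞) (fastVF H) := by
    unfold fastVF
    refine ContDiff.prodMk (ContDiff.prodMk ?_ ?_) contDiff_const
    · exact contDiff_pi.mpr fun i => (hdHs.clm_apply contDiff_const).neg
    · exact contDiff_pi.mpr fun i => hdHs.clm_apply contDiff_const
  have hYs : ContDiff ℝ ((⊤ : ℕ∞) : WithTop ℕ∞) Y :=
    (hω_smooth.inv fun m => (hω_pos m).ne').smul hfast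
  have hφts : ∀ t, ContDiff ℝ ((⊤ : ℕ∞) : WithTop ℕ∞) (φ t) := fun t =>
    hΦs.comp (contDiff_const.prodMk contDiff_id)
  have hJfd : ContDiff ℝ ((⊤ : ℕ∞) : WithTop ℕ∞) (fderiv ℝ J) := hJ_smooth.fderiv_right addone_le
  have hΦfd : ContDiff ℝ ((⊤ : ℕ∞) : WithTop ℕ∞) (fderiv ℝ Φ) := hΦs.fderiv_right addone_le
  have hΦdiff := hΦs.differentiable (by simp)
  -- slow components are invariant
  have hsnd : ∀ t m, (φ t m).2 = m.2 := by
    intro t m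
    have key : ∀ s : ℝ, HasDerivAt (fun τ => (φ τ m).2) 0 s := by
      intro s
      have h2 := (ContinuousLinearMap.snd ℝ (Fast r) (Slow k)).hasFDerivAt.comp_hasDerivAt s
        (hφ' s m)
      have h0 : (ContinuousLinearMap.snd ℝ (Fast r) (Slow k))
          ((ω (φ s m))⁻¹ • fastVF H (φ s m)) = 0 := by
        simp [fastVF]
      rwa [h0] at h2
    have hconst := is_const_of_deriv_eq_zero (fun s => (key s).differentiableAt)
      (fun s => (key s).deriv) t 0
    simpa [hφ0 m] using hconst
  have hPsnd : ∀ t m (w : SF r k), (fderiv ℝ (φ t) m w).2 = w.2 := by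
    intro t m w
    have h1 : HasFDerivAt (fun n => (φ t n).2)
        ((ContinuousLinearMap.snd ℝ (Fast r) (Slow k)).comp (fderiv ℝ (φ t) m)) m :=
      (ContinuousLinearMap.snd ℝ (Fast r) (Slow k)).hasFDerivAt.comp m
        (((hφts t).differentiable (by simp)) m).hasFDerivAt
    have he : (fun n => (φ t n).2) = (fun n : SF r k => n.2) := funext fun n => hsnd t n
    rw [he] at h1
    have h2 : (ContinuousLinearMap.snd ℝ (Fast r) (Slow k)).comp (fderiv ℝ (φ t) m)
        = ContinuousLinearMap.snd ℝ (Fast r) (Slow k) :=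
      h1.unique (ContinuousLinearMap.snd ℝ (Fast r) (Slow k)).hasFDerivAt
    exact ContinuousLinearMap.ext_iff.mp h2 w
  -- hH2 restated
  have hH2' : ∀ (n : SF r k) (u : Fast r),
      fderiv ℝ J n (u, (0 : Slow k)) = (ω n)⁻¹ * fderiv ℝ H n (u, 0) := by
    intro n u; rw [hH2 n u, one_div]
  have hXH : ∀ n, fderiv ℝ H n (fastVF H n) = 0 := by
    intro n
    have h := clm_fast_apply (fderiv ℝ H n)
      (fun i => -(fderiv ℝ H n ((0, Pi.single i 1), 0)))
      (fun i => fderiv ℝ H n ((Pi.single i 1, 0), 0))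
    rw [show fastVF H n = (((fun i => -(fderiv ℝ H n ((0, Pi.single i 1), 0))),
      (fun i => fderiv ℝ H n ((Pi.single i 1, 0), 0))), 0) from rfl, h,
      ← Finset.sum_add_distrib]
    exact Finset.sum_eq_zero fun i _ => by ring
  have hJY : ∀ n, fderiv ℝ J n (Y n) = 0 := by
    intro n
    have h1 : fderiv ℝ J n (Y n) = (ω n)⁻¹ * fderiv ℝ J n (fastVF H n) := by
      rw [show Y n = (ω n)⁻¹ • fastVF H n from rfl, (fderiv ℝ J n).map_smul, smul_eq_mul]
    have h2 : fderiv ℝ J n (fastVF H n) = (ω n)⁻¹ * fderiv ℝ H n (fastVF H n) :=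
      hH2' n (fastVF H n).1
    rw [h1, h2, hXH n, mul_zero, mul_zero]
  have hJinv : ∀ t m, J (φ t m) = J m := by
    intro t m
    have key : ∀ s : ℝ, HasDerivAt (fun τ => J (φ τ m)) 0 s := by
      intro s
      have h := ((hJ_smooth.differentiable (by simp)) (φ s m)).hasFDerivAt.comp_hasDerivAt s
        (hφ' s m)
      have h0 : fderiv ℝ J (φ s m) ((ω (φ s m))⁻¹ • fastVF H (φ s m)) = 0 := hJY (φ s m)
      rwa [h0] at h
    have hconst := is_const_of_deriv_eq_zero (fun s => (key s).differentiableAt)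
      (fun s => (key s).deriv) t 0
    simpa [hφ0 m] using hconst
  have hchain : ∀ t m (w : SF r k),
      fderiv ℝ J (φ t m) (fderiv ℝ (φ t) m w) = fderiv ℝ J m w := by
    intro t m w
    have h1 : HasFDerivAt (fun n => J (φ t n))
        ((fderiv ℝ J (φ t m)).comp (fderiv ℝ (φ t) m)) m :=
      ((hJ_smooth.differentiable (by simp)) (φ t m)).hasFDerivAt.comp m
        (((hφts t).differentiable (by simp)) m).hasFDerivAt
    have he : (fun n => J (φ t n)) = J := funext fun n => hJinv t n
    rw [he] at h1
    have h2 := h1.unique ((hJ_smooth.differentiable (by simp)) m).hasFDerivAt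
    exact ContinuousLinearMap.ext_iff.mp h2 w
  have hYOm : ∀ (n W : SF r k), OmL (Y n) W = -((ω n)⁻¹ * fderiv ℝ H n (W.1, 0)) := by
    intro n W
    have h1 : OmL (Y n) W = (ω n)⁻¹ * OmFun (fastVF H n) W := by
      rw [OmL_apply, show Y n = (ω n)⁻¹ • fastVF H n from rfl, OmFun_smul_left]
    have h2 : OmFun (fastVF H n) W = -(fderiv ℝ H n (W.1, 0)) := by
      have h := clm_fast_apply (fderiv ℝ H n) W.1.1 W.1.2
      have hW : ((W.1.1, W.1.2), (0 : Slow k)) = (W.1, (0 : Slow k)) := by rw [Prod.mk.eta]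
      rw [hW] at h
      rw [h]
      show (∑ i, -(fderiv ℝ H n ((0, Pi.single i 1), 0)) * W.1.2 i)
        - (∑ i, fderiv ℝ H n ((Pi.single i 1, 0), 0) * W.1.1 i) = _
      rw [neg_add, sub_eq_add_neg, add_comm]
      congr 1
      · rw [neg_eq_iff_eq_neg, neg_neg]
        exact Finset.sum_congr rfl fun i _ => by ring
      · rw [← Finset.sum_neg_distrib]
        exact Finset.sum_congr rfl fun i _ => by ring
    rw [h1, h2]; ring
  -- the basic kernel and its integral
  set Z : SF r k →L[ℝ] SF r k := (ContinuousLinearMap.inr ℝ (Fast r) (Slow k)).comp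
    (ContinuousLinearMap.snd ℝ (Fast r) (Slow k)) with hZdef
  set KA : ℝ × SF r k → (SF r k →L[ℝ] ℝ) := fun p => (fderiv ℝ J (Φ p)).comp Z with hKAdef
  have hKAs : ContDiff ℝ ((⊤ : ℕ∞) : WithTop ℕ∞) KA := (hJfd.comp hΦs).clm_comp contDiff_const
  set AL : SF r k → (SF r k →L[ℝ] ℝ) := fun n => ∫ t in (0:ℝ)..(2*π), KA (t, n) with hALdef
  have hKAcont : ∀ n, Continuous fun t => KA (t, n) :=
    fun n => hKAs.continuous.comp (continuous_id.prodMk continuous_const)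
  have hKAint : ∀ n, IntervalIntegrable (fun t => KA (t, n)) volume 0 (2*π) :=
    fun n => (hKAcont n).intervalIntegrable 0 (2*π)
  have hALapp : ∀ n (w : SF r k), AL n w
      = ∫ t in (0:ℝ)..(2*π), fderiv ℝ J (φ t n) ((0 : Fast r), w.2) := by
    intro n w
    rw [show AL n = ∫ t in (0:ℝ)..(2*π), KA (t, n) from rfl,
      ContinuousLinearMap.intervalIntegral_apply (hKAint n) w]
    rfl
  -- full/partial derivative relation
  have hPfull : ∀ t m (w : SF r k), fderiv ℝ (φ t) m w = fderiv ℝ Φ (t, m) (0, w) := by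
    intro t m w
    have h1 : HasFDerivAt (φ t)
        ((fderiv ℝ Φ (t, m)).comp (ContinuousLinearMap.inr ℝ ℝ (SF r k))) m :=
      (hΦdiff (t, m)).hasFDerivAt.comp m (hasFDerivAt_prodMk_right t m)
    rw [h1.fderiv]; rfl
  -- KEY pointwise identity
  have hKEY : ∀ t m (w : SF r k), fderiv ℝ J (φ t m) ((0 : Fast r), w.2)
      = fderiv ℝ J m w + OmL (Y (Φ (t, m))) (fderiv ℝ Φ (t, m) (0, w)) := by
    intro t m w
    have hsplit : ((0 : Fast r), w.2)
        = fderiv ℝ (φ t) m w - ((fderiv ℝ (φ t) m w).1, (0 : Slow k)) := by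
      apply Prod.ext
      · simp
      · simp [hPsnd t m w]
    rw [hsplit, map_sub, hchain t m w, hH2' (φ t m) (fderiv ℝ (φ t) m w).1,
      ← hPfull t m w, hYOm (Φ (t, m)) (fderiv ℝ (φ t) m w)]
    ring
  -- generator identity
  have hgen : ∀ p : ℝ × SF r k, fderiv ℝ Φ p ((1:ℝ), (0 : SF r k)) = Y (Φ p) := by
    intro p
    obtain ⟨s, m'⟩ := p
    have h1 : HasDerivAt (fun τ => Φ (τ, m')) (fderiv ℝ Φ (s, m') (1, 0)) s :=
      by have h := (hΦdiff (s, m')).hasFDerivAt.comp_hasDerivAt s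
            ((hasDerivAt_id s).prodMk (hasDerivAt_const s m')); exact h
    exact h1.unique (hφ' s m')
  -- variational equation
  have hVar : ∀ (m w : SF r k) (t : ℝ), HasDerivAt (fun s => fderiv ℝ Φ (s, m) (0, w))
      (fderiv ℝ Y (Φ (t, m)) (fderiv ℝ Φ (t, m) (0, w))) t := by
    intro m w t
    have hDd := hΦfd.differentiable (by simp)
    have hc : HasDerivAt (fun s => fderiv ℝ Φ (s, m)) (fderiv ℝ (fderiv ℝ Φ) (t, m) (1, 0)) t :=
      (hDd (t, m)).hasFDerivAt.comp_hasDerivAt t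
        ((hasDerivAt_id t).prodMk (hasDerivAt_const t m))
    have happ : HasDerivAt (fun s => fderiv ℝ Φ (s, m) (0, w))
        (fderiv ℝ (fderiv ℝ Φ) (t, m) (1, 0) (0, w)) t :=
      (ContinuousLinearMap.apply ℝ (SF r k) ((0:ℝ), w)).hasFDerivAt.comp_hasDerivAt t hc
    have hsym : fderiv ℝ (fderiv ℝ Φ) (t, m) (1, 0) (0, w)
        = fderiv ℝ (fderiv ℝ Φ) (t, m) (0, w) (1, 0) :=
      (hΦs.contDiffAt.isSymmSndFDerivAt (by simpa using two_le)).eq (1, 0) (0, w)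
    have hLHS : HasFDerivAt (fun p => fderiv ℝ Φ p ((1:ℝ), (0 : SF r k)))
        ((ContinuousLinearMap.apply ℝ (SF r k) ((1:ℝ), (0 : SF r k))).comp
          (fderiv ℝ (fderiv ℝ Φ) (t, m))) (t, m) :=
      (ContinuousLinearMap.apply ℝ (SF r k) ((1:ℝ), (0 : SF r k))).hasFDerivAt.comp (t, m)
        (hDd (t, m)).hasFDerivAt
    have hRHS : HasFDerivAt (fun p => Y (Φ p))
        ((fderiv ℝ Y (Φ (t, m))).comp (fderiv ℝ Φ (t, m))) (t, m) :=
      ((hYs.differentiable (by simp)) (Φ (t, m))).hasFDerivAt.comp (t, m)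
        (hΦdiff (t, m)).hasFDerivAt
    have he : (fun p : ℝ × SF r k => fderiv ℝ Φ p ((1:ℝ), (0 : SF r k)))
        = fun p => Y (Φ p) := funext hgen
    rw [he] at hLHS
    have h2 := hLHS.unique hRHS
    have h3 := ContinuousLinearMap.ext_iff.mp h2 ((0:ℝ), w)
    rw [hsym] at happ
    simp only [ContinuousLinearMap.comp_apply, ContinuousLinearMap.apply_apply] at h3
    rw [h3] at happ
    exact happ
  -- endpoints
  have hφT : φ (2*π) = fun n => n := by
    funext n
    have h := hper 0 n
    rw [zero_add] at h
    rw [h, hφ0]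
  have hφ0f : φ (0:ℝ) = fun n => n := funext hφ0
  have hPT : ∀ (m w : SF r k), fderiv ℝ Φ ((2*π : ℝ), m) (0, w) = w := by
    intro m w
    rw [← hPfull (2*π) m w, hφT, fderiv_id']
    rfl
  have hP0 : ∀ (m w : SF r k), fderiv ℝ Φ ((0:ℝ), m) (0, w) = w := by
    intro m w
    rw [← hPfull 0 m w, hφ0f, fderiv_id']
    rfl
  -- continuity helpers in t
  have hcontP_t : ∀ (m w : SF r k), ContDiff ℝ ((⊤ : ℕ∞) : WithTop ℕ∞)
      (fun t : ℝ => fderiv ℝ Φ (t, m) (0, w)) := fun m w =>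
    (hΦfd.comp (contDiff_id.prodMk contDiff_const)).clm_apply contDiff_const
  have hcontDY_t : ∀ (m w : SF r k), ContDiff ℝ ((⊤ : ℕ∞) : WithTop ℕ∞)
      (fun t : ℝ => fderiv ℝ Y (Φ (t, m)) (fderiv ℝ Φ (t, m) (0, w))) := fun m w =>
    ((hYs.fderiv_right addone_le).comp
      (hΦs.comp (contDiff_id.prodMk contDiff_const))).clm_apply (hcontP_t m w)
  -- FTC cancellation
  have hFTC : ∀ (m w w' : SF r k),
      (∫ t in (0:ℝ)..(2*π),
        (OmL (fderiv ℝ Y (Φ (t, m)) (fderiv ℝ Φ (t, m) (0, w))) (fderiv ℝ Φ (t, m) (0, w'))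
        + OmL (fderiv ℝ Φ (t, m) (0, w))
            (fderiv ℝ Y (Φ (t, m)) (fderiv ℝ Φ (t, m) (0, w'))))) = 0 := by
    intro m w w'
    have hderiv : ∀ t : ℝ, HasDerivAt
        (fun s => OmL (fderiv ℝ Φ (s, m) (0, w)) (fderiv ℝ Φ (s, m) (0, w')))
        (OmL (fderiv ℝ Y (Φ (t, m)) (fderiv ℝ Φ (t, m) (0, w))) (fderiv ℝ Φ (t, m) (0, w'))
          + OmL (fderiv ℝ Φ (t, m) (0, w))
              (fderiv ℝ Y (Φ (t, m)) (fderiv ℝ Φ (t, m) (0, w')))) t := by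
      intro t
      have hc : HasDerivAt (fun s => OmL (fderiv ℝ Φ (s, m) (0, w)))
          (OmL (fderiv ℝ Y (Φ (t, m)) (fderiv ℝ Φ (t, m) (0, w)))) t :=
        OmL.hasFDerivAt.comp_hasDerivAt t (hVar m w t)
      exact hc.clm_apply (hVar m w' t)
    have hcont : Continuous fun t : ℝ =>
        OmL (fderiv ℝ Y (Φ (t, m)) (fderiv ℝ Φ (t, m) (0, w))) (fderiv ℝ Φ (t, m) (0, w'))
        + OmL (fderiv ℝ Φ (t, m) (0, w))
            (fderiv ℝ Y (Φ (t, m)) (fderiv ℝ Φ (t, m) (0, w'))) := by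
      apply Continuous.add
      · exact ((contDiff_const.clm_apply (hcontDY_t m w)).clm_apply (hcontP_t m w')).continuous
      · exact ((contDiff_const.clm_apply (hcontP_t m w)).clm_apply (hcontDY_t m w')).continuous
    rw [intervalIntegral.integral_eq_sub_of_hasDerivAt (fun t _ => hderiv t)
      (hcont.intervalIntegrable 0 (2*π))]
    rw [hPT m w, hPT m w', hP0 m w, hP0 m w', sub_self]
  -- the Γ-kernels
  set KG : SF r k → ℝ × SF r k → ℝ :=
    fun w p => OmL (Y (Φ p)) (fderiv ℝ Φ p (0, w)) with hKGdef
  have hKGs : ∀ w, ContDiff ℝ ((⊤ : ℕ∞) : WithTop ℕ∞) (KG w) := fun w =>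
    (contDiff_const.clm_apply (hYs.comp hΦs)).clm_apply (hΦfd.clm_apply contDiff_const)
  have hKGcont_t : ∀ (w n : SF r k), Continuous fun t : ℝ => KG w (t, n) := fun w n =>
    (hKGs w).continuous.comp (continuous_id.prodMk continuous_const)
  have hALsplit : ∀ w : SF r k, (fun n => AL n w)
      = fun n => (2*π) * fderiv ℝ J n w + ∫ t in (0:ℝ)..(2*π), KG w (t, n) := by
    intro w
    funext n
    have h1 : AL n w = ∫ t in (0:ℝ)..(2*π), (fderiv ℝ J n w + KG w (t, n)) := by
      rw [hALapp n w]
      apply intervalIntegral.integral_congr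
      intro t _
      exact hKEY t n w
    rw [h1, intervalIntegral.integral_add intervalIntegrable_const
      ((hKGcont_t w n).intervalIntegrable 0 (2*π)),
      intervalIntegral.integral_const, sub_zero, smul_eq_mul]
  -- derivative of the Γ-integral
  have hGd : ∀ (w m : SF r k), HasFDerivAt (fun n => ∫ t in (0:ℝ)..(2*π), KG w (t, n))
      (∫ t in (0:ℝ)..(2*π),
        (fderiv ℝ (KG w) (t, m)).comp (ContinuousLinearMap.inr ℝ ℝ (SF r k))) m := by
    intro w m
    exact parint_hasFDerivAt 0 (2*π) (KG w)
      (fun p => (fderiv ℝ (KG w) p).comp (ContinuousLinearMap.inr ℝ ℝ (SF r k)))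
      (hKGs w).continuous
      ((((hKGs w).fderiv_right addone_le).clm_comp contDiff_const).continuous)
      (fun t x => ((((hKGs w).differentiable (by simp)) (t, x)).hasFDerivAt.comp x
        (hasFDerivAt_prodMk_right t x))) m
  -- derivative of the applied AL
  have hJ2d := hJfd.differentiable (by simp)
  have hALd : ∀ (w m : SF r k), HasFDerivAt (fun n => AL n w)
      (((2*π) • ((ContinuousLinearMap.apply ℝ ℝ w).comp (fderiv ℝ (fderiv ℝ J) m)))
        + ∫ t in (0:ℝ)..(2*π),
            (fderiv ℝ (KG w) (t, m)).comp (ContinuousLinearMap.inr ℝ ℝ (SF r k))) m := by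
    intro w m
    rw [hALsplit w]
    have h1 : HasFDerivAt (fun n => fderiv ℝ J n w)
        ((ContinuousLinearMap.apply ℝ ℝ w).comp (fderiv ℝ (fderiv ℝ J) m)) m :=
      (ContinuousLinearMap.apply ℝ ℝ w).hasFDerivAt.comp m (hJ2d m).hasFDerivAt
    exact (h1.const_mul (2*π)).add (hGd w m)
  -- formula for the derivative of the Γ-kernel
  have hKGder : ∀ (w w' m : SF r k) (t : ℝ), fderiv ℝ (KG w) (t, m) ((0:ℝ), w')
      = OmL (fderiv ℝ Y (Φ (t, m)) (fderiv ℝ Φ (t, m) (0, w'))) (fderiv ℝ Φ (t, m) (0, w))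
        + OmL (Y (Φ (t, m))) (fderiv ℝ (fderiv ℝ Φ) (t, m) (0, w') (0, w)) := by
    intro w w' m t
    have hF1 : HasFDerivAt (fun p => Y (Φ p))
        ((fderiv ℝ Y (Φ (t, m))).comp (fderiv ℝ Φ (t, m))) (t, m) :=
      ((hYs.differentiable (by simp)) (Φ (t, m))).hasFDerivAt.comp (t, m)
        (hΦdiff (t, m)).hasFDerivAt
    have hF2 : HasFDerivAt (fun p : ℝ × SF r k => fderiv ℝ Φ p ((0:ℝ), w))
        ((ContinuousLinearMap.apply ℝ (SF r k) ((0:ℝ), w)).comp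
          (fderiv ℝ (fderiv ℝ Φ) (t, m))) (t, m) :=
      (ContinuousLinearMap.apply ℝ (SF r k) ((0:ℝ), w)).hasFDerivAt.comp (t, m)
        ((hΦfd.differentiable (by simp)) (t, m)).hasFDerivAt
    have hc : HasFDerivAt (fun p => OmL (Y (Φ p)))
        (OmL.comp ((fderiv ℝ Y (Φ (t, m))).comp (fderiv ℝ Φ (t, m)))) (t, m) :=
      OmL.hasFDerivAt.comp (t, m) hF1
    have h0 := (hc.clm_apply hF2).fderiv
    rw [h0]
    simp only [ContinuousLinearMap.add_apply, ContinuousLinearMap.comp_apply,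
      ContinuousLinearMap.flip_apply, ContinuousLinearMap.apply_apply]
    rw [add_comm]
  -- symmetry of second derivatives
  have hsymJ := fun m : SF r k => (hJ_smooth.contDiffAt.isSymmSndFDerivAt (by simpa using two_le)).eq (x := m)
  have hsymΦ := fun p : ℝ × SF r k => (hΦs.contDiffAt.isSymmSndFDerivAt (by simpa using two_le)).eq (x := p)
  -- continuity of applied kernel derivatives
  have hKGdcont : ∀ (w w' m : SF r k), Continuous fun t : ℝ =>
      fderiv ℝ (KG w) (t, m) ((0:ℝ), w') := fun w w' m =>
    ((((hKGs w).fderiv_right addone_le).comp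
      (contDiff_id.prodMk contDiff_const)).clm_apply contDiff_const).continuous
  have hKGint : ∀ (w m : SF r k), IntervalIntegrable (fun t =>
      (fderiv ℝ (KG w) (t, m)).comp (ContinuousLinearMap.inr ℝ ℝ (SF r k))) volume 0 (2*π) :=
    fun w m => (((((hKGs w).fderiv_right addone_le).comp
      (contDiff_id.prodMk contDiff_const)).clm_comp contDiff_const).continuous).intervalIntegrable 0 (2*π)
  -- MAIN SYMMETRY
  have hDsym : ∀ (m w w' : SF r k),
      fderiv ℝ (fun n => AL n w) m w' = fderiv ℝ (fun n => AL n w') m w := by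
    intro m w w'
    rw [(hALd w m).fderiv, (hALd w' m).fderiv]
    simp only [ContinuousLinearMap.add_apply, ContinuousLinearMap.coe_smul',
      Pi.smul_apply, ContinuousLinearMap.comp_apply, ContinuousLinearMap.apply_apply]
    rw [hsymJ m w' w]
    congr 1
    rw [ContinuousLinearMap.intervalIntegral_apply (hKGint w m) w',
      ContinuousLinearMap.intervalIntegral_apply (hKGint w' m) w]
    have e1 : ∀ t : ℝ, ((fderiv ℝ (KG w) (t, m)).comp
        (ContinuousLinearMap.inr ℝ ℝ (SF r k))) w' = fderiv ℝ (KG w) (t, m) ((0:ℝ), w') :=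
      fun t => rfl
    have e2 : ∀ t : ℝ, ((fderiv ℝ (KG w') (t, m)).comp
        (ContinuousLinearMap.inr ℝ ℝ (SF r k))) w = fderiv ℝ (KG w') (t, m) ((0:ℝ), w) :=
      fun t => rfl
    rw [← sub_eq_zero]
    have hi1 : IntervalIntegrable (fun t => ((fderiv ℝ (KG w) (t, m)).comp
        (ContinuousLinearMap.inr ℝ ℝ (SF r k))) w') volume 0 (2*π) := by
      simp only [e1]; exact (hKGdcont w w' m).intervalIntegrable 0 (2*π)
    have hi2 : IntervalIntegrable (fun t => ((fderiv ℝ (KG w') (t, m)).comp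
        (ContinuousLinearMap.inr ℝ ℝ (SF r k))) w) volume 0 (2*π) := by
      simp only [e2]; exact (hKGdcont w' w m).intervalIntegrable 0 (2*π)
    rw [← intervalIntegral.integral_sub hi1 hi2]
    have hptw : ∀ t : ℝ, ((fderiv ℝ (KG w) (t, m)).comp
          (ContinuousLinearMap.inr ℝ ℝ (SF r k))) w'
        - ((fderiv ℝ (KG w') (t, m)).comp (ContinuousLinearMap.inr ℝ ℝ (SF r k))) w
        = -(OmL (fderiv ℝ Y (Φ (t, m)) (fderiv ℝ Φ (t, m) (0, w))) (fderiv ℝ Φ (t, m) (0, w'))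
          + OmL (fderiv ℝ Φ (t, m) (0, w))
              (fderiv ℝ Y (Φ (t, m)) (fderiv ℝ Φ (t, m) (0, w')))) := by
      intro t
      rw [e1 t, e2 t, hKGder w w' m t, hKGder w' w m t, hsymΦ (t, m) ((0:ℝ), w') ((0:ℝ), w),
        OmL_antisymm (fderiv ℝ Y (Φ (t, m)) (fderiv ℝ Φ (t, m) (0, w')))
          (fderiv ℝ Φ (t, m) (0, w))]
      ring
    rw [intervalIntegral.integral_congr (fun t _ => hptw t), intervalIntegral.integral_neg,
      hFTC m w w', neg_zero]
  -- AL only depends on w.2 and not on the fast base point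
  have hALw2 : ∀ (n w : SF r k), AL n w = AL n ((0 : Fast r), w.2) := by
    intro n w
    rw [hALapp n w, hALapp n ((0 : Fast r), w.2)]
  have hALzero : ∀ (n : SF r k) (u : Fast r), AL n (u, (0 : Slow k)) = 0 := by
    intro n u
    rw [hALapp n (u, (0 : Slow k))]
    have h0 : ∀ t : ℝ, fderiv ℝ J (φ t n) ((0 : Fast r), ((u, (0 : Slow k)) : SF r k).2)
        = 0 := by
      intro t
      have : (((0 : Fast r), ((u, (0 : Slow k)) : SF r k).2) : SF r k) = 0 := rfl
      rw [this, map_zero]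
    simp only [h0, intervalIntegral.integral_zero]
  have hconstFast : ∀ (x : Fast r) (s : Slow k) (w : SF r k),
      AL (x, s) ((0 : Fast r), w.2) = AL ((0 : Fast r), s) ((0 : Fast r), w.2) := by
    intro x s w
    set w0 : SF r k := ((0 : Fast r), w.2) with hw0
    have hf : Differentiable ℝ (fun x : Fast r => AL (x, s) w0) := fun x =>
      by have h := ((hALd w0 (x, s)).comp x (hasFDerivAt_prodMk_left (𝕜 := ℝ) x s)).differentiableAt; exact h
    have hf0 : ∀ x : Fast r, fderiv ℝ (fun x : Fast r => AL (x, s) w0) x = 0 := by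
      intro x
      have hcomp : HasFDerivAt (fun x : Fast r => AL (x, s) w0)
          ((fderiv ℝ (fun n => AL n w0) (x, s)).comp
            (ContinuousLinearMap.inl ℝ (Fast r) (Slow k))) x :=
        by have h := ((hALd w0 (x, s)).differentiableAt.hasFDerivAt).comp x (hasFDerivAt_prodMk_left (𝕜 := ℝ) x s); exact h
      rw [hcomp.fderiv]
      refine ContinuousLinearMap.ext fun u => ?_
      simp only [ContinuousLinearMap.comp_apply, ContinuousLinearMap.inl_apply,
        ContinuousLinearMap.zero_apply]
      have h4 : fderiv ℝ (fun n => AL n w0) (x, s) ((u, (0 : Slow k)))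
          = fderiv ℝ (fun n => AL n ((u, (0 : Slow k)))) (x, s) w0 :=
        hDsym (x, s) w0 (u, (0 : Slow k))
      rw [h4, show (fun n : SF r k => AL n ((u, (0 : Slow k)))) = fun _ => (0:ℝ) from
        funext fun n => hALzero n u, fderiv_fun_const]
      rfl
    exact is_const_of_fderiv_eq_zero hf hf0 x 0
  -- smoothness of AL and definition of ζ
  have hALs : ContDiff ℝ ((⊤ : ℕ∞) : WithTop ℕ∞) AL := parint_contDiff 0 (2*π) KA hKAs
  set ζ : Slow k → (Slow k →L[ℝ] ℝ) := fun s => (2*π)⁻¹ •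
    ((AL ((0 : Fast r), s)).comp (ContinuousLinearMap.inr ℝ (Fast r) (Slow k))) with hζdef
  have hζs : ContDiff ℝ ((⊤ : ℕ∞) : WithTop ℕ∞) ζ :=
    ((hALs.comp (contDiff_const.prodMk contDiff_id)).clm_comp contDiff_const).const_smul _
  have hζapp : ∀ (s v : Slow k),
      ζ s v = (2*π)⁻¹ * AL ((0 : Fast r), s) ((0 : Fast r), v) := by
    intro s v
    rw [hζdef]
    simp only [ContinuousLinearMap.coe_smul', Pi.smul_apply, ContinuousLinearMap.comp_apply,
      smul_eq_mul]
    rfl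
  have hALζ : ∀ (m w : SF r k), 1 / (2*π) * AL m w = ζ m.2 w.2 := by
    intro m w
    have h2 : AL m ((0 : Fast r), w.2) = AL ((0 : Fast r), m.2) ((0 : Fast r), w.2) :=
      hconstFast m.1 m.2 w
    rw [hALw2 m w, h2, hζapp m.2 w.2, one_div]
  have hmain : ∀ (m w : SF r k), avg1 φ (d1Form J) m w = ζ m.2 w.2 := by
    intro m w
    have h1 : avg1 φ (d1Form J) m w = 1 / (2*π) * AL m w := by
      unfold avg1 d1Form
      congr 1
      rw [hALapp m w]
      apply intervalIntegral.integral_congr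
      intro t _
      dsimp only
      rw [hPsnd t m w]
    rw [h1, hALζ m w]
  refine ⟨ζ, hζs, ?_, hmain, ?_⟩
  · -- closedness of ζ
    intro s u v
    have happv : ∀ v' : Slow k, HasFDerivAt (fun s' => ζ s' v')
        ((ContinuousLinearMap.apply ℝ ℝ v').comp (fderiv ℝ ζ s)) s := fun v' =>
      (ContinuousLinearMap.apply ℝ ℝ v').hasFDerivAt.comp s
        ((hζs.differentiable (by simp)) s).hasFDerivAt
    have hval : ∀ u' v' : Slow k, fderiv ℝ ζ s u' v' = fderiv ℝ (fun s' => ζ s' v') s u' := by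
      intro u' v'
      rw [(happv v').fderiv]
      rfl
    rw [hval u v, hval v u]
    have hder : ∀ v' u' : Slow k, fderiv ℝ (fun s' => ζ s' v') s u'
        = (2*π)⁻¹ * fderiv ℝ (fun n => AL n (((0 : Fast r), v') : SF r k)) ((0 : Fast r), s)
            (((0 : Fast r), u') : SF r k) := by
      intro v' u'
      have hfm : (fun s' => ζ s' v')
          = fun s' => (2*π)⁻¹ * AL ((0 : Fast r), s') (((0 : Fast r), v') : SF r k) :=
        funext fun s' => hζapp s' v'
      rw [hfm]
      have hin : HasFDerivAt (fun s' : Slow k => AL ((0 : Fast r), s') (((0 : Fast r), v') : SF r k))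
          ((fderiv ℝ (fun n => AL n (((0 : Fast r), v') : SF r k)) ((0 : Fast r), s)).comp
            (ContinuousLinearMap.inr ℝ (Fast r) (Slow k))) s :=
        ((hALd (((0 : Fast r), v') : SF r k) ((0 : Fast r), s)).differentiableAt.hasFDerivAt).comp
          s (hasFDerivAt_prodMk_right (0 : Fast r) s)
      rw [(hin.const_mul ((2*π)⁻¹)).fderiv]
      simp only [ContinuousLinearMap.coe_smul', Pi.smul_apply, ContinuousLinearMap.comp_apply,
        smul_eq_mul]
      rfl
    rw [hder v u, hder u v,
      hDsym ((0 : Fast r), s) (((0 : Fast r), v) : SF r k) (((0 : Fast r), u) : SF r k)]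
  · -- change of momentum map by a slow function
    intro c hc m w
    have hcd := hc.differentiable (by simp)
    have hJ'd : ∀ n : SF r k, HasFDerivAt (fun n : SF r k => J n + c n.2)
        (fderiv ℝ J n
          + (fderiv ℝ c n.2).comp (ContinuousLinearMap.snd ℝ (Fast r) (Slow k))) n :=
      fun n => ((hJ_smooth.differentiable (by simp)) n).hasFDerivAt.add
        ((hcd n.2).hasFDerivAt.comp n (ContinuousLinearMap.snd ℝ (Fast r) (Slow k)).hasFDerivAt)
    have hKAwcont : Continuous fun t : ℝ => KA (t, m) w :=
      ((hKAs.clm_apply contDiff_const).comp (contDiff_id.prodMk contDiff_const)).continuous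
    have h1 : avg1 φ (d1Form (fun n => J n + c n.2)) m w
        = 1 / (2*π) * ∫ t in (0:ℝ)..(2*π), (KA (t, m) w + fderiv ℝ c m.2 w.2) := by
      unfold avg1 d1Form
      congr 1
      apply intervalIntegral.integral_congr
      intro t _
      dsimp only
      rw [hPsnd t m w, (hJ'd (φ t m)).fderiv]
      simp only [ContinuousLinearMap.add_apply, ContinuousLinearMap.comp_apply,
        ContinuousLinearMap.coe_snd']
      rw [hsnd t m]
      rfl
    rw [h1, intervalIntegral.integral_add (hKAwcont.intervalIntegrable 0 (2*π))
      intervalIntegrable_const, intervalIntegral.integral_const, sub_zero, smul_eq_mul,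
      mul_add]
    have h3 : (∫ t in (0:ℝ)..(2*π), KA (t, m) w) = AL m w :=
      (ContinuousLinearMap.intervalIntegral_apply (hKAint m) w).symm
    rw [h3, hALζ m w]
    congr 1
    rw [one_div]
    rw [← mul_assoc, inv_mul_cancel₀ hT0, one_mul]
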